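/- Let m ≥ n ≥ 1 and let c_1, …, c_n ∈ ℝ^m be linearly independent vectors whose Gram–Schmidt orthogonalization c*_1, …, c*_n satisfies the LLL reducedness conditions: |μ_{ij}| ≤ 1/2 for all 1 ≤ j < i ≤ n, and ‖c*_i‖₂² ≥ ½‖c*_{i−1}‖₂² for all 1 < i ≤ n. Let t′ ∈ ℝ^m be such that for every i ∈ {1,…,n} the coefficient x*_i = ⟨t′, c*_i⟩/⟨c*_i, c*_i⟩ lies in the half-open interval (−1/2, 1/2]. If z ∈ ℤ^n is such that Σ_{i=1}^n z_i c_i is a closest lattice point to t′ in the Euclidean norm, i.e., ‖Σ_i z_i c_i − t′‖₂ ≤ ‖Σ_i y_i c_i − t′‖₂ for every y ∈ ℤ^n, then max_i |z_i| < 2^{n²}. -/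

import Mathlib

open scoped RealInnerProductSpace

/-- The Gram–Schmidt orthogonalization of a family of vectors indexed by `Fin n`
(instances given explicitly to aid elaboration). -/
noncomputable def gso {m n : ℕ} (c : Fin n → EuclideanSpace ℝ (Fin m)) :
    Fin n → EuclideanSpace ℝ (Fin m) :=
  @InnerProductSpace.gramSchmidt ℝ _ _ _ _ (Fin n) Fin.instLinearOrder (Fin.instLocallyFiniteOrderBot n)
    IsWellOrder.toIsWellFounded c

/-- Gram–Schmidt coefficient. -/
noncomputable def mu {m n : ℕ} (c : Fin n → EuclideanSpace ℝ (Fin m)) (i j : Fin n) : ℝ :=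
  ⟪c i, gso c j⟫ / ⟪gso c j, gso c j⟫

/-- Squared norms of the Gram–Schmidt vectors. -/
noncomputable def rr {m n : ℕ} (c : Fin n → EuclideanSpace ℝ (Fin m)) (i : Fin n) : ℝ :=
  ⟪gso c i, gso c i⟫

lemma gso_orth {m n : ℕ} (c : Fin n → EuclideanSpace ℝ (Fin m)) {i j : Fin n}
    (h : i ≠ j) : ⟪gso c i, gso c j⟫ = 0 :=
  @InnerProductSpace.gramSchmidt_orthogonal ℝ _ _ _ _ (Fin n) Fin.instLinearOrder (Fin.instLocallyFiniteOrderBot n)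
    IsWellOrder.toIsWellFounded c i j h

lemma gso_ne_zero {m n : ℕ} {c : Fin n → EuclideanSpace ℝ (Fin m)}
    (hc : LinearIndependent ℝ c) (i : Fin n) : gso c i ≠ 0 :=
  @InnerProductSpace.gramSchmidt_ne_zero ℝ _ _ _ _ (Fin n) Fin.instLinearOrder (Fin.instLocallyFiniteOrderBot n)
    IsWellOrder.toIsWellFounded c i hc

lemma gso_tri {m n : ℕ} (c : Fin n → EuclideanSpace ℝ (Fin m)) {i j : Fin n}
    (h : i < j) : ⟪c i, gso c j⟫ = 0 := by
  rw [real_inner_comm]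
  exact @InnerProductSpace.gramSchmidt_inv_triangular ℝ _ _ _ _ (Fin n) Fin.instLinearOrder
    (Fin.instLocallyFiniteOrderBot n) IsWellOrder.toIsWellFounded c i j h

lemma gso_decomp {m n : ℕ} (c : Fin n → EuclideanSpace ℝ (Fin m)) (k : Fin n) :
    c k = gso c k + ∑ j ∈ Finset.Iio k, mu c k j • gso c j := by
  have h := @InnerProductSpace.gramSchmidt_def'' ℝ _ _ _ _ (Fin n) Fin.instLinearOrder
    (Fin.instLocallyFiniteOrderBot n) IsWellOrder.toIsWellFounded c k
  rw [h]
  congr 1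
  refine Finset.sum_congr rfl fun j _ => ?_
  congr 1
  rw [mu, real_inner_comm (c k), real_inner_self_eq_norm_sq]
  norm_num
  rfl

lemma rr_pos {m n : ℕ} {c : Fin n → EuclideanSpace ℝ (Fin m)}
    (hc : LinearIndependent ℝ c) (i : Fin n) : 0 < rr c i := by
  rw [rr, real_inner_self_eq_norm_sq]
  exact pow_pos (norm_pos_iff.mpr (gso_ne_zero hc i)) 2

lemma inner_c_gso {m n : ℕ} {c : Fin n → EuclideanSpace ℝ (Fin m)}
    (hc : LinearIndependent ℝ c) (i k : Fin n) :
    ⟪c i, gso c k⟫ = mu c i k * rr c k := by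
  rw [mu, rr, div_mul_cancel₀]
  exact ne_of_gt (rr_pos hc k)

lemma inner_self_gso {m n : ℕ} (c : Fin n → EuclideanSpace ℝ (Fin m)) (k : Fin n) :
    ⟪c k, gso c k⟫ = rr c k := by
  nth_rw 1 [gso_decomp c k]
  rw [inner_add_left, sum_inner, rr]
  have : ∀ j ∈ Finset.Iio k, ⟪mu c k j • gso c j, gso c k⟫ = 0 := by
    intro j hj
    rw [real_inner_smul_left, gso_orth c (ne_of_lt (Finset.mem_Iio.1 hj)), mul_zero]
  rw [Finset.sum_congr rfl this, Finset.sum_const_zero, add_zero]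

lemma norm_c_sq {m n : ℕ} {c : Fin n → EuclideanSpace ℝ (Fin m)}
    (hc : LinearIndependent ℝ c) (k : Fin n) :
    ‖c k‖ ^ 2 = rr c k + ∑ j ∈ Finset.Iio k, (mu c k j) ^ 2 * rr c j := by
  rw [← real_inner_self_eq_norm_sq]
  nth_rw 2 [gso_decomp c k]
  rw [inner_add_right, inner_sum, inner_self_gso]
  congr 1
  refine Finset.sum_congr rfl fun j _ => ?_
  rw [real_inner_smul_right, inner_c_gso hc]
  ring

lemma fin_Iio_empty {n : ℕ} {k : Fin n} (h : (k : ℕ) = 0) : Finset.Iio k = ∅ := by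
  ext i
  simp only [Finset.mem_Iio, Finset.notMem_empty, iff_false, Fin.lt_def, h]
  omega

lemma fin_Iio_eq_Iic {n : ℕ} {k k' : Fin n} (h : (k' : ℕ) + 1 = (k : ℕ)) :
    Finset.Iio k = Finset.Iic k' := by
  ext i
  simp only [Finset.mem_Iio, Finset.mem_Iic, Fin.lt_def, Fin.le_def]
  omega

lemma fin_Ioi_empty {n : ℕ} {k : Fin n} (h : (k : ℕ) + 1 = n) : Finset.Ioi k = ∅ := by
  ext i
  simp only [Finset.mem_Ioi, Finset.notMem_empty, iff_false, Fin.lt_def]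
  have := i.isLt
  omega

lemma fin_Ioi_insert {n : ℕ} {k k' : Fin n} (h : (k : ℕ) + 1 = (k' : ℕ)) :
    Finset.Ioi k = insert k' (Finset.Ioi k') := by
  ext i
  simp only [Finset.mem_Ioi, Finset.mem_insert, Fin.lt_def, Fin.ext_iff]
  omega

lemma fin_pred_induction {n : ℕ} (P : Fin n → Prop)
    (h : ∀ k : Fin n, (∀ k' : Fin n, (k' : ℕ) + 1 = (k : ℕ) → P k') → P k) :
    ∀ k, P k := by
  have H : ∀ v : ℕ, ∀ k : Fin n, (k : ℕ) = v → P k := by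
    intro v
    induction v with
    | zero =>
      intro k hk
      exact h k (fun k' hk' => absurd hk' (by omega))
    | succ w ih =>
      intro k hk
      exact h k (fun k' hk' => ih k' (by omega))
  intro k
  exact H k.1 k rfl

lemma fin_succ_induction {n : ℕ} (P : Fin n → Prop)
    (h : ∀ k : Fin n, (∀ k' : Fin n, (k : ℕ) + 1 = (k' : ℕ) → P k') → P k) :
    ∀ k, P k := by
  have H : ∀ t : ℕ, ∀ k : Fin n, n - (k : ℕ) ≤ t + 1 → P k := by
    intro t
    induction t with
    | zero =>
      intro k hk
      refine h k (fun k' hk' => ?_)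
      exact absurd hk' (by have := k'.isLt; have := k.isLt; omega)
    | succ w ih =>
      intro k hk
      exact h k (fun k' hk' => ih k' (by omega))
  intro k
  exact H n k (by omega)

lemma nat_bound {n : ℕ} (hn : 1 ≤ n) :
    (4 ^ (n - 1) + 1) * (2 ^ (n - 1) + 1) < 4 * 2 ^ (n ^ 2) := by
  obtain ⟨s, rfl⟩ : ∃ s, n = s + 1 := ⟨n - 1, by omega⟩
  simp only [Nat.add_sub_cancel]
  have h4 : 1 ≤ 4 ^ s := Nat.one_le_pow _ _ (by norm_num)
  have h2 : 1 ≤ 2 ^ s := Nat.one_le_pow _ _ (by norm_num)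
  have hss : s ≤ s * s := by
    cases s with
    | zero => simp
    | succ t => exact Nat.le_mul_of_pos_left _ (Nat.succ_pos t)
  calc (4 ^ s + 1) * (2 ^ s + 1) ≤ (2 * 4 ^ s) * (2 * 2 ^ s) :=
        Nat.mul_le_mul (by omega) (by omega)
    _ = 2 ^ (3 * s + 2) := by
        rw [show (4 : ℕ) = 2 ^ 2 from rfl, ← pow_mul]
        ring
    _ < 2 ^ ((s + 1) ^ 2 + 2) := by
        refine Nat.pow_lt_pow_right (by norm_num) ?_
        have : (s + 1) ^ 2 = s * s + 2 * s + 1 := by ring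
        omega
    _ = 4 * 2 ^ ((s + 1) ^ 2) := by rw [pow_add]; ring

set_option maxHeartbeats 2000000 in
/-- If `c_1, …, c_n ∈ ℝ^m` are linearly independent with LLL-reduced
Gram–Schmidt data (`|μ_{ij}| ≤ 1/2` for `j < i` and `‖c*_i‖² ≥ ½‖c*_{i−1}‖²`), and the target
`t'` has all its Gram–Schmidt coefficients `⟪t', c*_i⟫/⟪c*_i, c*_i⟫` in `(−1/2, 1/2]`, then
the coefficient vector `z ∈ ℤⁿ` of any closest lattice point `∑ z_i c_i` to `t'` in the
Euclidean norm satisfies `max_i |z_i| < 2^{n²}`. -/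
theorem stmt_4 (m n : ℕ) (hn : 1 ≤ n) (hmn : n ≤ m)
    (c : Fin n → EuclideanSpace ℝ (Fin m)) (hc : LinearIndependent ℝ c)
    (hμ : ∀ i j : Fin n, j < i →
      abs (⟪c i, gso c j⟫ / ⟪gso c j, gso c j⟫) ≤ 1 / 2)
    (hred : ∀ i j : Fin n, (j : ℕ) + 1 = (i : ℕ) →
      ‖gso c i‖ ^ 2 ≥ (1 / 2) * ‖gso c j‖ ^ 2)
    (t' : EuclideanSpace ℝ (Fin m))
    (ht' : ∀ i : Fin n,
      ⟪t', gso c i⟫ / ⟪gso c i, gso c i⟫ ∈ Set.Ioc (-(1/2) : ℝ) (1/2))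
    (z : Fin n → ℤ)
    (hz : ∀ y : Fin n → ℤ,
      ‖(∑ i, (z i : ℝ) • c i) - t'‖ ≤ ‖(∑ i, (y i : ℝ) • c i) - t'‖) :
    ∀ i, |z i| < 2 ^ (n ^ 2) := by
  have hr0 : ∀ i, (0:ℝ) < rr c i := fun i => rr_pos hc i
  have hmu : ∀ i j : Fin n, j < i → |mu c i j| ≤ 1/2 := hμ
  -- bound on target coefficients
  have hxs : ∀ k, |⟪t', gso c k⟫| ≤ (1/2) * rr c k := by
    intro k
    have h := ht' k
    have he : ⟪t', gso c k⟫ = (⟪t', gso c k⟫ / rr c k) * rr c k :=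
      (div_mul_cancel₀ _ (ne_of_gt (hr0 k))).symm
    rw [he, abs_mul, abs_of_pos (hr0 k)]
    exact mul_le_mul_of_nonneg_right (abs_le.2 ⟨le_of_lt h.1, h.2⟩) (le_of_lt (hr0 k))
  -- consecutive reduction
  have hcons : ∀ j k : Fin n, (j:ℕ) + 1 = (k:ℕ) → rr c j ≤ 2 * rr c k := by
    intro j k h
    have := hred k j h
    have hj : rr c j = ‖gso c j‖^2 := real_inner_self_eq_norm_sq _
    have hk : rr c k = ‖gso c k‖^2 := real_inner_self_eq_norm_sq _
    rw [hj, hk]; linarith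
  set d : EuclideanSpace ℝ (Fin m) := (∑ i, (z i : ℝ) • c i) - t' with hd
  -- Step A : near-optimality against unit moves
  have hA : ∀ k, |⟪d, c k⟫| ≤ ‖c k‖^2 / 2 := by
    intro k
    have key : ∀ s : ℤ, ‖d‖ ≤ ‖d + (s:ℝ) • c k‖ := by
      intro s
      have hy := hz (Function.update z k (z k + s))
      have hfun : ∀ i : Fin n, ((Function.update z k (z k + s) i : ℤ) : ℝ) • c i
          = (z i : ℝ) • c i + (if i = k then (s:ℝ) • c k else 0) := by
        intro i
        by_cases hik : i = k
        · subst hik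
          rw [Function.update_self, if_pos rfl]
          push_cast
          rw [add_smul]
        · rw [Function.update_of_ne hik, if_neg hik, add_zero]
      have hsum : (∑ i, ((Function.update z k (z k + s) i : ℤ) : ℝ) • c i)
          = (∑ i, (z i : ℝ) • c i) + (s:ℝ) • c k := by
        rw [Finset.sum_congr rfl fun i _ => hfun i, Finset.sum_add_distrib,
          Finset.sum_ite_eq' Finset.univ k (fun _ => (s:ℝ) • c k)]
        simp
      rw [hsum] at hy
      calc ‖d‖ ≤ ‖((∑ i, (z i : ℝ) • c i) + (s:ℝ) • c k) - t'‖ := hy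
        _ = ‖d + (s:ℝ) • c k‖ := by rw [hd, add_sub_right_comm]
    have h1 := key 1
    have h2 := key (-1)
    rw [Int.cast_one, one_smul] at h1
    rw [Int.cast_neg, Int.cast_one, neg_smul, one_smul, ← sub_eq_add_neg] at h2
    have e1 : ‖d + c k‖^2 = ‖d‖^2 + 2*⟪d, c k⟫ + ‖c k‖^2 := norm_add_sq_real d (c k)
    have e2 : ‖d - c k‖^2 = ‖d‖^2 - 2*⟪d, c k⟫ + ‖c k‖^2 := norm_sub_sq_real d (c k)
    have q1 : ‖d‖^2 ≤ ‖d + c k‖^2 := pow_le_pow_left₀ (norm_nonneg d) h1 2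
    have q2 : ‖d‖^2 ≤ ‖d - c k‖^2 := pow_le_pow_left₀ (norm_nonneg d) h2 2
    rw [abs_le]
    constructor <;> linarith
  -- Step B : expansion of ⟪d, c k⟫
  have hB : ∀ k, ⟪d, c k⟫ = ⟪d, gso c k⟫ + ∑ j ∈ Finset.Iio k, mu c k j * ⟪d, gso c j⟫ := by
    intro k
    nth_rw 1 [gso_decomp c k]
    rw [inner_add_right, inner_sum]
    congr 1
    exact Finset.sum_congr rfl fun j _ => real_inner_smul_right _ _ _
  have hF1 : ∀ k, |⟪d, gso c k⟫| ≤ ‖c k‖^2/2 + (1/2) * ∑ j ∈ Finset.Iio k, |⟪d, gso c j⟫| := by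
    intro k
    have he : ⟪d, gso c k⟫ = ⟪d, c k⟫ - ∑ j ∈ Finset.Iio k, mu c k j * ⟪d, gso c j⟫ := by
      have := hB k; linarith
    have habs : |⟪d, gso c k⟫| ≤ |⟪d, c k⟫| + |∑ j ∈ Finset.Iio k, mu c k j * ⟪d, gso c j⟫| := by
      rw [he, sub_eq_add_neg]
      exact (abs_add_le _ _).trans (by rw [abs_neg])
    refine habs.trans (add_le_add (hA k) ?_)
    calc |∑ j ∈ Finset.Iio k, mu c k j * ⟪d, gso c j⟫|
        ≤ ∑ j ∈ Finset.Iio k, |mu c k j * ⟪d, gso c j⟫| := Finset.abs_sum_le_sum_abs _ _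
      _ ≤ ∑ j ∈ Finset.Iio k, (1/2) * |⟪d, gso c j⟫| := by
          refine Finset.sum_le_sum fun j hj => ?_
          rw [abs_mul]
          exact mul_le_mul_of_nonneg_right (hmu k j (Finset.mem_Iio.1 hj)) (abs_nonneg _)
      _ = (1/2) * ∑ j ∈ Finset.Iio k, |⟪d, gso c j⟫| := (Finset.mul_sum _ _ _).symm
  have hcn : ∀ k, ‖c k‖^2 ≤ rr c k + (1/4) * ∑ j ∈ Finset.Iio k, rr c j := by
    intro k
    rw [norm_c_sq hc k, Finset.mul_sum]
    refine add_le_add_right (Finset.sum_le_sum fun j hj => ?_) _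
    have h1 := abs_le.1 (hmu k j (Finset.mem_Iio.1 hj))
    have h2 : mu c k j ^ 2 ≤ 1/4 := by nlinarith [h1.1, h1.2]
    exact mul_le_mul_of_nonneg_right h2 (hr0 j).le
  have hR : ∀ k : Fin n, ∑ j ∈ Finset.Iic k, rr c j ≤ (2^((k:ℕ)+1) - 1) * rr c k := by
    refine fin_pred_induction _ ?_
    intro k IH
    rw [← Finset.Iio_insert k, Finset.sum_insert (by simp)]
    by_cases h0 : (k:ℕ) = 0
    · rw [fin_Iio_empty h0, Finset.sum_empty, add_zero, h0]
      norm_num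
    · have hklt := k.isLt
      set k' : Fin n := ⟨(k:ℕ) - 1, by omega⟩ with hk'def
      have hk' : (k':ℕ) + 1 = (k:ℕ) := by simp [hk'def]; omega
      have IH' := IH k' hk'
      have hcons' := hcons k' k hk'
      rw [fin_Iio_eq_Iic hk']
      have hone : (1:ℝ) ≤ 2^((k':ℕ)+1) := one_le_pow₀ (by norm_num)
      have hstep : ∑ j ∈ Finset.Iic k', rr c j ≤ (2^((k':ℕ)+1) - 1) * (2 * rr c k) :=
        IH'.trans (mul_le_mul_of_nonneg_left hcons' (by linarith))
      rw [show (k:ℕ) + 1 = ((k':ℕ) + 1) + 1 by omega, pow_succ]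
      nlinarith [hr0 k]
  have hS : ∀ k : Fin n, ∑ j ∈ Finset.Iic k, |⟪d, gso c j⟫| ≤ 4^(k:ℕ) * rr c k := by
    refine fin_pred_induction _ ?_
    intro k IH
    rw [← Finset.Iio_insert k, Finset.sum_insert (by simp)]
    by_cases h0 : (k:ℕ) = 0
    · rw [fin_Iio_empty h0, Finset.sum_empty, add_zero, h0, pow_zero, one_mul]
      have h1 := hF1 k
      have h2 := hcn k
      rw [fin_Iio_empty h0, Finset.sum_empty] at h1 h2
      linarith [hr0 k]
    · have hklt := k.isLt
      set k' : Fin n := ⟨(k:ℕ) - 1, by omega⟩ with hk'def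
      have hk' : (k':ℕ) + 1 = (k:ℕ) := by simp [hk'def]; omega
      have IH' := IH k' hk'
      have hcons' := hcons k' k hk'
      have hRk' := hR k'
      have h1 := hF1 k
      have h2 := hcn k
      rw [fin_Iio_eq_Iic hk'] at h1 h2
      -- abbreviations
      have e3 : rr c k ≤ 4^((k':ℕ)) * rr c k :=
        le_mul_of_one_le_left (hr0 k).le (one_le_pow₀ (by norm_num))
      have e4 : 2^((k':ℕ)) * rr c k ≤ 4^((k':ℕ)) * rr c k :=
        mul_le_mul_of_nonneg_right (pow_le_pow_left₀ (by norm_num) (by norm_num) _) (hr0 k).le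
      have eR : ∑ j ∈ Finset.Iic k', rr c j ≤ 4 * (2^((k':ℕ)) * rr c k) := by
        have hone : (1:ℝ) ≤ 2^((k':ℕ)+1) := one_le_pow₀ (by norm_num)
        have := IH'
        have hstep : ∑ j ∈ Finset.Iic k', rr c j ≤ (2^((k':ℕ)+1) - 1) * (2 * rr c k) :=
          hRk'.trans (mul_le_mul_of_nonneg_left hcons' (by linarith))
        rw [pow_succ] at hstep
        nlinarith [hr0 k]
      have eS : ∑ j ∈ Finset.Iic k', |⟪d, gso c j⟫| ≤ 2 * (4^((k':ℕ)) * rr c k) := by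
        have h4 : (0:ℝ) ≤ 4^((k':ℕ)) := by positivity
        have := IH'.trans (mul_le_mul_of_nonneg_left hcons' h4)
        nlinarith
      rw [fin_Iio_eq_Iic hk', show (k:ℕ) = (k':ℕ) + 1 by omega, pow_succ]
      nlinarith [abs_nonneg (⟪d, gso c k⟫)]
  have hu : ∀ k : Fin n, |⟪d, gso c k⟫| ≤ (1/2) * 4^(k:ℕ) * rr c k := by
    intro k
    have h1 := hF1 k
    have h2 := hcn k
    by_cases h0 : (k:ℕ) = 0
    · rw [fin_Iio_empty h0, Finset.sum_empty] at h1 h2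
      rw [h0, pow_zero]
      linarith
    · have hklt := k.isLt
      set k' : Fin n := ⟨(k:ℕ) - 1, by omega⟩ with hk'def
      have hk' : (k':ℕ) + 1 = (k:ℕ) := by simp [hk'def]; omega
      have hcons' := hcons k' k hk'
      rw [fin_Iio_eq_Iic hk'] at h1 h2
      have e3 : rr c k ≤ 4^((k':ℕ)) * rr c k :=
        le_mul_of_one_le_left (hr0 k).le (one_le_pow₀ (by norm_num))
      have e4 : 2^((k':ℕ)) * rr c k ≤ 4^((k':ℕ)) * rr c k :=
        mul_le_mul_of_nonneg_right (pow_le_pow_left₀ (by norm_num) (by norm_num) _) (hr0 k).le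
      have eR : ∑ j ∈ Finset.Iic k', rr c j ≤ 4 * (2^((k':ℕ)) * rr c k) := by
        have hone : (1:ℝ) ≤ 2^((k':ℕ)+1) := one_le_pow₀ (by norm_num)
        have hstep : ∑ j ∈ Finset.Iic k', rr c j ≤ (2^((k':ℕ)+1) - 1) * (2 * rr c k) :=
          (hR k').trans (mul_le_mul_of_nonneg_left hcons' (by linarith))
        rw [pow_succ] at hstep
        nlinarith [hr0 k]
      have eS : ∑ j ∈ Finset.Iic k', |⟪d, gso c j⟫| ≤ 2 * (4^((k':ℕ)) * rr c k) := by
        have h4 : (0:ℝ) ≤ 4^((k':ℕ)) := by positivity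
        have := (hS k').trans (mul_le_mul_of_nonneg_left hcons' h4)
        nlinarith
      rw [show (k:ℕ) = (k':ℕ) + 1 by omega, pow_succ]
      nlinarith
  have huk : ∀ k, ⟪d, gso c k⟫ = (z k : ℝ) * rr c k
      + (∑ i ∈ Finset.Ioi k, (z i : ℝ) * (mu c i k * rr c k)) - ⟪t', gso c k⟫ := by
    intro k
    rw [hd, inner_sub_left, sum_inner]
    congr 1
    have hterm : ∀ i : Fin n, ⟪(z i : ℝ) • c i, gso c k⟫ = (z i : ℝ) * ⟪c i, gso c k⟫ :=
      fun i => real_inner_smul_left _ _ _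
    rw [Finset.sum_congr rfl fun i _ => hterm i]
    have h0 : ∀ x ∈ Finset.univ, x ∉ Finset.Ici k → (z x : ℝ) * ⟪c x, gso c k⟫ = 0 := by
      intro x _ hx
      rw [gso_tri c (by simpa [Finset.mem_Ici, not_le] using hx), mul_zero]
    rw [← Finset.sum_subset (Finset.subset_univ (Finset.Ici k)) h0,
      ← Finset.Ioi_insert k, Finset.sum_insert (by simp), inner_self_gso c k]
    congr 1
    refine Finset.sum_congr rfl fun i hi => ?_
    rw [inner_c_gso hc]
  have hzB : ∀ k, |(z k : ℝ)| ≤ ((4:ℝ)^(n-1) + 1)/2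
      + (1/2) * ∑ i ∈ Finset.Ioi k, |(z i : ℝ)| := by
    intro k
    have hzrr : (z k : ℝ) * rr c k = ⟪d, gso c k⟫ + ⟪t', gso c k⟫
        - ∑ i ∈ Finset.Ioi k, (z i : ℝ) * (mu c i k * rr c k) := by
      have := huk k; linarith
    have hstep1 : |(z k : ℝ) * rr c k| ≤ |⟪d, gso c k⟫| + |⟪t', gso c k⟫|
        + |∑ i ∈ Finset.Ioi k, (z i : ℝ) * (mu c i k * rr c k)| := by
      rw [hzrr, sub_eq_add_neg]
      refine (abs_add_le _ _).trans ?_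
      rw [abs_neg]
      exact add_le_add_left (abs_add_le _ _) _
    have hsum' : |∑ i ∈ Finset.Ioi k, (z i : ℝ) * (mu c i k * rr c k)|
        ≤ ((1/2) * ∑ i ∈ Finset.Ioi k, |(z i : ℝ)|) * rr c k := by
      refine (Finset.abs_sum_le_sum_abs _ _).trans ?_
      rw [Finset.mul_sum, Finset.sum_mul]
      refine Finset.sum_le_sum fun i hi => ?_
      rw [abs_mul, abs_mul, abs_of_pos (hr0 k)]
      have hm : |mu c i k| ≤ 1/2 := hmu i k (Finset.mem_Ioi.1 hi)
      have : |mu c i k| * rr c k ≤ (1/2) * rr c k :=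
        mul_le_mul_of_nonneg_right hm (hr0 k).le
      calc |(z i : ℝ)| * (|mu c i k| * rr c k) ≤ |(z i : ℝ)| * ((1/2) * rr c k) :=
            mul_le_mul_of_nonneg_left this (abs_nonneg _)
        _ = 1/2 * |(z i : ℝ)| * rr c k := by ring
    have hu' : |⟪d, gso c k⟫| ≤ ((1/2) * 4^(n-1)) * rr c k := by
      refine (hu k).trans ?_
      have : (4:ℝ)^(k:ℕ) ≤ 4^(n-1) := pow_le_pow_right₀ (by norm_num) (by have := k.isLt; omega)
      have := mul_le_mul_of_nonneg_right this (hr0 k).le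
      nlinarith
    have hfinal : |(z k : ℝ)| * rr c k ≤ (((4:ℝ)^(n-1) + 1)/2
        + (1/2) * ∑ i ∈ Finset.Ioi k, |(z i : ℝ)|) * rr c k := by
      have habs : |(z k : ℝ)| * rr c k = |(z k : ℝ) * rr c k| := by
        rw [abs_mul, abs_of_pos (hr0 k)]
      rw [habs]
      refine hstep1.trans ?_
      have := hxs k
      nlinarith [hu', hsum']
    exact le_of_mul_le_mul_right hfinal (hr0 k)
  have hBpos : (0:ℝ) < ((4:ℝ)^(n-1) + 1)/2 := by positivity
  have hW : ∀ k : Fin n, ∑ i ∈ Finset.Ioi k, |(z i : ℝ)|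
      ≤ (((4:ℝ)^(n-1) + 1)/2) * (2^((n-1) - (k:ℕ)) - 1) := by
    refine fin_succ_induction _ ?_
    intro k IH
    by_cases hlast : (k:ℕ) + 1 = n
    · rw [fin_Ioi_empty hlast, Finset.sum_empty, show (n-1) - (k:ℕ) = 0 by omega, pow_zero]
      norm_num
    · have hklt := k.isLt
      set k' : Fin n := ⟨(k:ℕ) + 1, by omega⟩ with hk'def
      have hk' : (k:ℕ) + 1 = (k':ℕ) := by simp [hk'def]
      have IH' := IH k' hk'
      rw [fin_Ioi_insert hk', Finset.sum_insert (by simp)]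
      have hzk' := hzB k'
      have hexp : (n-1) - (k:ℕ) = ((n-1) - (k':ℕ)) + 1 := by omega
      rw [hexp, pow_succ]
      have hone : (1:ℝ) ≤ 2^((n-1) - (k':ℕ)) := one_le_pow₀ (by norm_num)
      nlinarith [hBpos, IH', hzk']
  -- conclusion
  intro k
  have h1 : |(z k : ℝ)| ≤ ((4:ℝ)^(n-1) + 1)/2
      + (1/2) * ((((4:ℝ)^(n-1) + 1)/2) * (2^((n-1) - (k:ℕ)) - 1)) :=
    (hzB k).trans (by linarith [hW k])
  have hexp : (2:ℝ)^((n-1) - (k:ℕ)) ≤ 2^(n-1) :=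
    pow_le_pow_right₀ (by norm_num) (by omega)
  have h2 : |(z k : ℝ)| ≤ ((4:ℝ)^(n-1) + 1)/2
      + (1/2) * ((((4:ℝ)^(n-1) + 1)/2) * (2^(n-1) - 1)) := by
    refine h1.trans ?_
    have := mul_le_mul_of_nonneg_left (by linarith [hexp] :
      ((2:ℝ)^((n-1) - (k:ℕ)) - 1) ≤ 2^(n-1) - 1) hBpos.le
    linarith
  have hcast : ((4:ℝ)^(n-1) + 1) * ((2:ℝ)^(n-1) + 1) < 4 * 2^(n^2) := by
    have := nat_bound hn
    have : ((4 ^ (n - 1) + 1) * (2 ^ (n - 1) + 1) : ℝ) < ((4 * 2 ^ (n ^ 2) : ℕ) : ℝ) := by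
      exact_mod_cast this
    push_cast at this
    convert this using 2 <;> norm_num
  have hreal : ((4:ℝ)^(n-1) + 1)/2
      + (1/2) * ((((4:ℝ)^(n-1) + 1)/2) * (2^(n-1) - 1)) < (2:ℝ)^(n^2) := by
    nlinarith [hcast]
  have hfin : |(z k : ℝ)| < (2:ℝ)^(n^2) := lt_of_le_of_lt h2 hreal
  have : ((|z k| : ℤ) : ℝ) < (((2:ℤ) ^ (n^2) : ℤ) : ℝ) := by push_cast; exact hfin
  exact_mod_cast this
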